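/- (Proposition 4, horizontal variant: expansion of a URA by a Golay array pair.) Let L, K, N, M ≥ 1, let (U, V) be a Golay complementary array pair of unimodular L×K matrices, and let W_PA, W_PB : {0,…,N−1}×{0,…,M−1} → ℂ be arbitrary matrices. Define LN×2KM matrices W_A, W_B by: for 0 ≤ l ≤ L−1, 0 ≤ k ≤ K−1, 0 ≤ n ≤ N−1, 0 ≤ m ≤ M−1, W_A(lN+n, kM+m) = U(l,k)·W_PA(n,m), W_A(lN+n, KM+kM+m) = −V(l,k)·conj(W_PB(N−1−n, M−1−m)), W_B(lN+n, kM+m) = U(l,k)·W_PB(n,m), W_B(lN+n, KM+kM+m) = V(l,k)·conj(W_PA(N−1−n, M−1−m)). Then for all ψ_y, ψ_z ∈ ℝ, |F_{W_A}(ψ_y,ψ_z)|² + |F_{W_B}(ψ_y,ψ_z)|² = 2LK·( |F_{W_PA}(ψ_y,ψ_z)|² + |F_{W_PB}(ψ_y,ψ_z)|² ). -/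

import Mathlib

/-- The one-dimensional array factor of a length-`M` sequence `u` at spatial
frequency `ψ`: `F_u(ψ) = Σ_{m=0}^{M-1} u(m) · exp(i·m·ψ)`. -/
noncomputable def arrayFactor (M : ℕ) (u : ℕ → ℂ) (ψ : ℝ) : ℂ :=
  ∑ m ∈ Finset.range M, u m * Complex.exp (Complex.I * (m : ℂ) * (ψ : ℂ))

/-- The aperiodic autocorrelation of a length-`M` sequence `u` at shift `τ`:
`R_u(τ) = Σ_{m=0}^{M-1-τ} u(m) · conj(u(m+τ))`. -/
noncomputable def aacf (M : ℕ) (u : ℕ → ℂ) (τ : ℕ) : ℂ :=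
  ∑ m ∈ Finset.range (M - τ), u m * (starRingEnd ℂ) (u (m + τ))

/-- The two-dimensional array factor of an `N×M` matrix `W` at `(ψ_y, ψ_z)`:
`F_W(ψ_y,ψ_z) = Σ_{n=0}^{N-1} Σ_{m=0}^{M-1} W(n,m) · exp(i·(n·ψ_z + m·ψ_y))`. -/
noncomputable def arrayFactor2 (N M : ℕ) (W : ℕ → ℕ → ℂ) (ψy ψz : ℝ) : ℂ :=
  ∑ n ∈ Finset.range N, ∑ m ∈ Finset.range M,
    W n m * Complex.exp (Complex.I * ((n : ℂ) * (ψz : ℂ) + (m : ℂ) * (ψy : ℂ)))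

/-- The two-dimensional aperiodic autocorrelation of an `N×M` matrix `W` at integer
shifts `(τ_n, τ_m)`: the sum of `W(n,m)·conj(W(n+τ_n, m+τ_m))` over all pairs
`(n,m)` with `0 ≤ n, n+τ_n ≤ N−1` and `0 ≤ m, m+τ_m ≤ M−1`. -/
noncomputable def aacf2 (N M : ℕ) (W : ℕ → ℕ → ℂ) (τn τm : ℤ) : ℂ :=
  ∑ n ∈ Finset.range N, ∑ m ∈ Finset.range M,
    if 0 ≤ (n : ℤ) + τn ∧ (n : ℤ) + τn < (N : ℤ) ∧
        0 ≤ (m : ℤ) + τm ∧ (m : ℤ) + τm < (M : ℤ) then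
      W n m * (starRingEnd ℂ) (W ((n : ℤ) + τn).toNat ((m : ℤ) + τm).toNat)
    else 0

/-- `(U, V)` is a Golay complementary array pair of `N×M` matrices: the sum of their
two-dimensional aperiodic autocorrelations vanishes at every nonzero shift. -/
def IsGolayArrayPair (N M : ℕ) (U V : ℕ → ℕ → ℂ) : Prop :=
  ∀ τn τm : ℤ, |τn| ≤ (N : ℤ) - 1 → |τm| ≤ (M : ℤ) - 1 → ¬(τn = 0 ∧ τm = 0) →
    aacf2 N M U τn τm + aacf2 N M V τn τm = 0


section GolayAux
open Finset Complex

lemma conj_exp_I_real (z : ℂ) (hz : (starRingEnd ℂ) z = z) :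
    (starRingEnd ℂ) (Complex.exp (Complex.I * z)) = Complex.exp (-(Complex.I * z)) := by
  rw [← Complex.exp_conj, map_mul, Complex.conj_I, hz]
  congr 1
  ring

lemma conj_exp_term (n m : ℕ) (a b : ℝ) :
    (starRingEnd ℂ) (Complex.exp (Complex.I * ((n:ℂ) * b + (m:ℂ) * a))) =
      Complex.exp (-(Complex.I * ((n:ℂ) * b + (m:ℂ) * a))) := by
  rw [← Complex.exp_conj]
  congr 1
  simp [map_mul, map_add]

lemma mul_conj_eq_sum (L K : ℕ) (W : ℕ → ℕ → ℂ) (a b : ℝ) :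
    arrayFactor2 L K W a b * (starRingEnd ℂ) (arrayFactor2 L K W a b) =
    ∑ τ ∈ Finset.Icc (1 - (L:ℤ)) ((L:ℤ) - 1) ×ˢ Finset.Icc (1 - (K:ℤ)) ((K:ℤ) - 1),
      aacf2 L K W τ.1 τ.2 *
        Complex.exp (-(Complex.I * ((τ.1 : ℂ) * (b:ℂ) + (τ.2 : ℂ) * (a:ℂ)))) := by
  have hL : arrayFactor2 L K W a b
      = ∑ p ∈ Finset.range L ×ˢ Finset.range K,
          W p.1 p.2 * Complex.exp (Complex.I * ((p.1 : ℂ) * b + (p.2 : ℂ) * a)) := by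
    rw [Finset.sum_product]; rfl
  rw [hL, map_sum, Finset.sum_mul_sum, ← Finset.sum_product']
  have hR : ∀ τ : ℤ × ℤ,
      aacf2 L K W τ.1 τ.2 *
        Complex.exp (-(Complex.I * ((τ.1 : ℂ) * (b:ℂ) + (τ.2 : ℂ) * (a:ℂ)))) =
      ∑ q ∈ Finset.range L ×ˢ Finset.range K,
        (if 0 ≤ (q.1 : ℤ) + τ.1 ∧ (q.1 : ℤ) + τ.1 < (L : ℤ) ∧
            0 ≤ (q.2 : ℤ) + τ.2 ∧ (q.2 : ℤ) + τ.2 < (K : ℤ) then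
          W q.1 q.2 * (starRingEnd ℂ) (W ((q.1 : ℤ) + τ.1).toNat ((q.2 : ℤ) + τ.2).toNat)
            * Complex.exp (-(Complex.I * ((τ.1 : ℂ) * (b:ℂ) + (τ.2 : ℂ) * (a:ℂ))))
        else 0) := by
    intro τ
    rw [aacf2, ← Finset.sum_product', Finset.sum_mul]
    refine Finset.sum_congr rfl fun q _ => ?_
    rw [ite_mul, zero_mul]
  simp only [hR]
  rw [← Finset.sum_product']
  rw [← Finset.sum_filter]
  refine Finset.sum_nbij' (i := fun x : (ℕ × ℕ) × ℕ × ℕ =>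
      ((((x.2.1 : ℤ) - x.1.1, (x.2.2 : ℤ) - x.1.2), x.1) : (ℤ × ℤ) × ℕ × ℕ))
    (j := fun y : (ℤ × ℤ) × ℕ × ℕ =>
      ((y.2, (((y.2.1 : ℤ) + y.1.1).toNat, ((y.2.2 : ℤ) + y.1.2).toNat)) : (ℕ × ℕ) × ℕ × ℕ))
    ?_ ?_ ?_ ?_ ?_
  · rintro ⟨⟨n, m⟩, n', m'⟩ hx
    simp only [Finset.mem_product, Finset.mem_range, Finset.mem_filter, Finset.mem_Icc] at hx ⊢
    omega
  · rintro ⟨⟨τn, τm⟩, n, m⟩ hy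
    simp only [Finset.mem_product, Finset.mem_range, Finset.mem_filter, Finset.mem_Icc] at hy ⊢
    omega
  · rintro ⟨⟨n, m⟩, n', m'⟩ hx
    simp only [Finset.mem_product, Finset.mem_range] at hx
    simp only [Prod.mk.injEq, true_and, and_true]
    omega
  · rintro ⟨⟨τn, τm⟩, n, m⟩ hy
    simp only [Finset.mem_product, Finset.mem_range, Finset.mem_filter, Finset.mem_Icc] at hy
    simp only [Prod.mk.injEq, true_and, and_true]
    omega
  · rintro ⟨⟨n, m⟩, n', m'⟩ hx
    simp only [Finset.mem_product, Finset.mem_range] at hx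
    simp only []
    have h1 : ((n : ℤ) + ((n' : ℤ) - n)).toNat = n' := by omega
    have h2 : ((m : ℤ) + ((m' : ℤ) - m)).toNat = m' := by omega
    rw [h1, h2, map_mul, conj_exp_term]
    rw [show (W n m * Complex.exp (Complex.I * ((n:ℂ) * b + (m:ℂ) * a))) *
        ((starRingEnd ℂ) (W n' m') *
          Complex.exp (-(Complex.I * ((n':ℂ) * b + (m':ℂ) * a)))) =
      W n m * (starRingEnd ℂ) (W n' m') *
        (Complex.exp (Complex.I * ((n:ℂ) * b + (m:ℂ) * a)) *
          Complex.exp (-(Complex.I * ((n':ℂ) * b + (m':ℂ) * a)))) from by ring]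
    rw [← Complex.exp_add]
    congr 1
    push_cast
    ring

lemma aacf2_zero_zero (L K : ℕ) (W : ℕ → ℕ → ℂ)
    (hW : ∀ l < L, ∀ k < K, ‖W l k‖ = 1) :
    aacf2 L K W 0 0 = (L : ℂ) * (K : ℂ) := by
  rw [aacf2]
  have : ∀ n ∈ Finset.range L, ∀ m ∈ Finset.range K,
      (if 0 ≤ (n : ℤ) + 0 ∧ (n : ℤ) + 0 < (L : ℤ) ∧ 0 ≤ (m : ℤ) + 0 ∧ (m : ℤ) + 0 < (K : ℤ) then
        W n m * (starRingEnd ℂ) (W ((n : ℤ) + 0).toNat ((m : ℤ) + 0).toNat) else 0) = 1 := by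
    intro n hn m hm
    simp only [Finset.mem_range] at hn hm
    rw [if_pos (by omega)]
    have h1 : ((n : ℤ) + 0).toNat = n := by omega
    have h2 : ((m : ℤ) + 0).toNat = m := by omega
    rw [h1, h2, Complex.mul_conj, Complex.normSq_eq_norm_sq, hW n hn m hm]
    norm_num
  rw [Finset.sum_congr rfl fun n hn => Finset.sum_congr rfl fun m hm => this n hn m hm]
  simp [mul_comm]

lemma golay_pointwise (L K : ℕ) (hL : 1 ≤ L) (hK : 1 ≤ K) (U V : ℕ → ℕ → ℂ)
    (hU : ∀ l < L, ∀ k < K, ‖U l k‖ = 1)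
    (hV : ∀ l < L, ∀ k < K, ‖V l k‖ = 1)
    (hGolay : IsGolayArrayPair L K U V) (a b : ℝ) :
    arrayFactor2 L K U a b * (starRingEnd ℂ) (arrayFactor2 L K U a b) +
      arrayFactor2 L K V a b * (starRingEnd ℂ) (arrayFactor2 L K V a b) =
    2 * (L : ℂ) * (K : ℂ) := by
  rw [mul_conj_eq_sum, mul_conj_eq_sum, ← Finset.sum_add_distrib]
  rw [Finset.sum_eq_single_of_mem ((0, 0) : ℤ × ℤ) (by
    simp only [Finset.mem_product, Finset.mem_Icc]
    omega) (by
    rintro ⟨τn, τm⟩ hmem hne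
    simp only [Finset.mem_product, Finset.mem_Icc] at hmem
    have hne' : ¬(τn = 0 ∧ τm = 0) := by
      intro h; exact hne (by simp [h.1, h.2])
    have h := hGolay τn τm (abs_le.mpr ⟨by omega, by omega⟩)
      (abs_le.mpr ⟨by omega, by omega⟩) hne'
    rw [← add_mul, h, zero_mul])]
  rw [aacf2_zero_zero L K U hU, aacf2_zero_zero L K V hV]
  simp
  ring

lemma sum_range_mul' {β : Type*} [AddCommMonoid β] (L N : ℕ) (f : ℕ → β) :
    ∑ x ∈ Finset.range (L * N), f x =
      ∑ l ∈ Finset.range L, ∑ n ∈ Finset.range N, f (l * N + n) := by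
  induction L with
  | zero => simp
  | succ L ih =>
    rw [Finset.sum_range_succ, ← ih, Nat.succ_mul, Finset.range_eq_Ico,
      ← Finset.sum_Ico_consecutive _ (Nat.zero_le (L*N)) (Nat.le_add_right _ _),
      ← Finset.range_eq_Ico, Finset.sum_Ico_eq_sum_range]
    simp

lemma blockA (L K N M : ℕ) (X P W : ℕ → ℕ → ℂ)
    (h : ∀ l < L, ∀ k < K, ∀ n < N, ∀ m < M, W (l*N+n) (k*M+m) = X l k * P n m)
    (ψy ψz : ℝ) :
    ∑ r ∈ Finset.range (L*N), ∑ c ∈ Finset.range (K*M),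
      W r c * Complex.exp (Complex.I * ((r:ℂ)*ψz + (c:ℂ)*ψy)) =
    arrayFactor2 L K X (M*ψy) (N*ψz) * arrayFactor2 N M P ψy ψz := by
  rw [sum_range_mul' L N]
  have hc : ∀ r : ℕ, ∑ c ∈ Finset.range (K*M),
        W r c * Complex.exp (Complex.I * ((r:ℂ)*ψz + (c:ℂ)*ψy))
      = ∑ k ∈ Finset.range K, ∑ m ∈ Finset.range M,
          W r (k*M+m) * Complex.exp (Complex.I * ((r:ℂ)*ψz + ((k*M+m : ℕ):ℂ)*ψy)) := by
    intro r; rw [sum_range_mul' K M]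
  simp only [hc]
  rw [arrayFactor2, arrayFactor2, Finset.sum_mul_sum]
  refine Finset.sum_congr rfl fun l hl => ?_
  refine Finset.sum_congr rfl fun n hn => ?_
  rw [Finset.sum_mul_sum]
  refine Finset.sum_congr rfl fun k hk => Finset.sum_congr rfl fun m hm => ?_
  simp only [Finset.mem_range] at hl hn hk hm
  rw [h l hl k hk n hn m hm,
    show (X l k * Complex.exp (Complex.I * ((l:ℂ) * ((N:ℝ)*ψz : ℝ) + (k:ℂ) * ((M:ℝ)*ψy : ℝ)))) *
        (P n m * Complex.exp (Complex.I * ((n:ℂ) * ψz + (m:ℂ) * ψy))) =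
      X l k * P n m * (Complex.exp (Complex.I * ((l:ℂ) * ((N:ℝ)*ψz : ℝ) + (k:ℂ) * ((M:ℝ)*ψy : ℝ))) *
        Complex.exp (Complex.I * ((n:ℂ) * ψz + (m:ℂ) * ψy))) from by ring,
    ← Complex.exp_add]
  congr 1
  push_cast
  ring

lemma blockB (L K N M : ℕ) (X P W : ℕ → ℕ → ℂ)
    (h : ∀ l < L, ∀ k < K, ∀ n < N, ∀ m < M,
      W (l*N+n) (K*M + k*M + m) = X l k * (starRingEnd ℂ) (P (N-1-n) (M-1-m)))
    (ψy ψz : ℝ) :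
    ∑ r ∈ Finset.range (L*N), ∑ c ∈ Finset.range (K*M),
      W r (K*M + c) * Complex.exp (Complex.I * ((r:ℂ)*ψz + ((K*M + c : ℕ):ℂ)*ψy)) =
    arrayFactor2 L K X (M*ψy) (N*ψz) *
      (Complex.exp (Complex.I * (((K*M : ℕ):ℂ)*ψy + ((N:ℂ)-1)*ψz + ((M:ℂ)-1)*ψy)) *
        (starRingEnd ℂ) (arrayFactor2 N M P ψy ψz)) := by
  rw [sum_range_mul' L N]
  have hc : ∀ r : ℕ, ∑ c ∈ Finset.range (K*M),
        W r (K*M + c) * Complex.exp (Complex.I * ((r:ℂ)*ψz + ((K*M + c : ℕ):ℂ)*ψy))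
      = ∑ k ∈ Finset.range K, ∑ m ∈ Finset.range M,
          W r (K*M + k*M + m) *
            Complex.exp (Complex.I * ((r:ℂ)*ψz + ((K*M + k*M + m : ℕ):ℂ)*ψy)) := by
    intro r
    rw [sum_range_mul' K M]
    exact Finset.sum_congr rfl fun k _ => Finset.sum_congr rfl fun m _ => by
      rw [Nat.add_assoc]
  simp only [hc]
  rw [arrayFactor2, arrayFactor2, Finset.sum_mul]
  refine Finset.sum_congr rfl fun l hl => ?_
  rw [Finset.sum_comm, Finset.sum_mul]
  refine Finset.sum_congr rfl fun k hk => ?_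
  simp only [Finset.mem_range] at hl hk
  -- rewrite using h
  have e1 : ∑ n ∈ Finset.range N, ∑ m ∈ Finset.range M,
      W (l*N+n) (K*M + k*M + m) *
        Complex.exp (Complex.I * (((l*N+n : ℕ):ℂ)*ψz + ((K*M + k*M + m : ℕ):ℂ)*ψy)) =
      ∑ n ∈ Finset.range N, ∑ m ∈ Finset.range M,
        (fun u v => X l k * (starRingEnd ℂ) (P u v) *
          Complex.exp (Complex.I * (((l*N + (N-1-u) : ℕ):ℂ)*ψz +
            ((K*M + k*M + (M-1-v) : ℕ):ℂ)*ψy))) (N-1-n) (M-1-m) := by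
    refine Finset.sum_congr rfl fun n hn => Finset.sum_congr rfl fun m hm => ?_
    simp only [Finset.mem_range] at hn hm
    rw [h l hl k hk n hn m hm]
    have d1 : N - 1 - (N - 1 - n) = n := by omega
    have d2 : M - 1 - (M - 1 - m) = m := by omega
    simp only [d1, d2]
  rw [e1,
    Finset.sum_range_reflect (fun u => ∑ m ∈ Finset.range M,
      (fun u v => X l k * (starRingEnd ℂ) (P u v) *
        Complex.exp (Complex.I * (((l*N + (N-1-u) : ℕ):ℂ)*ψz +
          ((K*M + k*M + (M-1-v) : ℕ):ℂ)*ψy))) u (M-1-m)) N]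
  simp only []
  rw [Finset.sum_congr rfl fun u _ => Finset.sum_range_reflect
    (fun v => X l k * (starRingEnd ℂ) (P u v) *
      Complex.exp (Complex.I * (((l*N + (N-1-u) : ℕ):ℂ)*ψz +
        ((K*M + k*M + (M-1-v) : ℕ):ℂ)*ψy))) M]
  -- now termwise
  rw [map_sum]
  simp only [map_sum, map_mul, conj_exp_term, Finset.mul_sum]
  refine Finset.sum_congr rfl fun n hn => Finset.sum_congr rfl fun m hm => ?_
  simp only [Finset.mem_range] at hn hm
  have c1 : ((N - 1 - n : ℕ) : ℂ) = (N:ℂ) - 1 - (n:ℂ) := by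
    rw [Nat.cast_sub (show n ≤ N-1 by omega), Nat.cast_sub (show 1 ≤ N by omega)]
    norm_num
  have c2 : ((M - 1 - m : ℕ) : ℂ) = (M:ℂ) - 1 - (m:ℂ) := by
    rw [Nat.cast_sub (show m ≤ M-1 by omega), Nat.cast_sub (show 1 ≤ M by omega)]
    norm_num
  rw [show X l k * Complex.exp (Complex.I * ((l:ℂ) * ((N:ℝ)*ψz : ℝ) + (k:ℂ) * ((M:ℝ)*ψy : ℝ))) *
      (Complex.exp (Complex.I * (((K*M : ℕ):ℂ)*ψy + ((N:ℂ)-1)*ψz + ((M:ℂ)-1)*ψy)) *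
        ((starRingEnd ℂ) (P n m) *
          Complex.exp (-(Complex.I * ((n:ℂ) * ψz + (m:ℂ) * ψy))))) =
    X l k * (starRingEnd ℂ) (P n m) *
      (Complex.exp (Complex.I * ((l:ℂ) * ((N:ℝ)*ψz : ℝ) + (k:ℂ) * ((M:ℝ)*ψy : ℝ))) *
        (Complex.exp (Complex.I * (((K*M : ℕ):ℂ)*ψy + ((N:ℂ)-1)*ψz + ((M:ℂ)-1)*ψy)) *
          Complex.exp (-(Complex.I * ((n:ℂ) * ψz + (m:ℂ) * ψy))))) from by ring,
    ← Complex.exp_add, ← Complex.exp_add]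
  congr 1
  push_cast [c1, c2]
  ring

end GolayAux

/-- Proposition 4, horizontal variant: expanding a two-dimensional protoarray by a
Golay complementary array pair of expanders, appending horizontally, yields an array
whose sum power pattern is `2LK` times that of the protoarray. -/
theorem ura_expansion_horizontal (L K N M : ℕ)
    (hL : 1 ≤ L) (hK : 1 ≤ K) (hN : 1 ≤ N) (hM : 1 ≤ M)
    (U V WPA WPB WA WB : ℕ → ℕ → ℂ)
    (hU : ∀ l < L, ∀ k < K, ‖U l k‖ = 1)
    (hV : ∀ l < L, ∀ k < K, ‖V l k‖ = 1)
    (hGolay : IsGolayArrayPair L K U V)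
    (hA1 : ∀ l < L, ∀ k < K, ∀ n < N, ∀ m < M,
      WA (l * N + n) (k * M + m) = U l k * WPA n m)
    (hA2 : ∀ l < L, ∀ k < K, ∀ n < N, ∀ m < M,
      WA (l * N + n) (K * M + k * M + m) =
        -(V l k * (starRingEnd ℂ) (WPB (N - 1 - n) (M - 1 - m))))
    (hB1 : ∀ l < L, ∀ k < K, ∀ n < N, ∀ m < M,
      WB (l * N + n) (k * M + m) = U l k * WPB n m)
    (hB2 : ∀ l < L, ∀ k < K, ∀ n < N, ∀ m < M,
      WB (l * N + n) (K * M + k * M + m) =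
        V l k * (starRingEnd ℂ) (WPA (N - 1 - n) (M - 1 - m)))
    (ψy ψz : ℝ) :
    ‖arrayFactor2 (L * N) (2 * K * M) WA ψy ψz‖ ^ 2 +
        ‖arrayFactor2 (L * N) (2 * K * M) WB ψy ψz‖ ^ 2 =
      2 * L * K * (‖arrayFactor2 N M WPA ψy ψz‖ ^ 2 +
                    ‖arrayFactor2 N M WPB ψy ψz‖ ^ 2) := by
  classical
  set P := arrayFactor2 L K U ((M:ℝ)*ψy) ((N:ℝ)*ψz) with hPdef
  set Q := arrayFactor2 L K V ((M:ℝ)*ψy) ((N:ℝ)*ψz) with hQdef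
  set A := arrayFactor2 N M WPA ψy ψz with hAdef
  set B := arrayFactor2 N M WPB ψy ψz with hBdef
  set c : ℂ := Complex.exp (Complex.I *
    (((K*M : ℕ):ℂ)*(ψy:ℂ) + ((N:ℂ)-1)*(ψz:ℂ) + ((M:ℂ)-1)*(ψy:ℂ))) with hcdef
  have colsplit : ∀ g : ℕ → ℂ, ∑ x ∈ Finset.range (2*K*M), g x
      = ∑ x ∈ Finset.range (K*M), g x + ∑ x ∈ Finset.range (K*M), g (K*M + x) := by
    intro g
    rw [show 2*K*M = K*M + K*M by ring, Finset.range_eq_Ico,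
      ← Finset.sum_Ico_consecutive _ (Nat.zero_le _) (Nat.le_add_right _ _),
      ← Finset.range_eq_Ico, Finset.sum_Ico_eq_sum_range]
    simp
  have split : ∀ W' : ℕ → ℕ → ℂ, arrayFactor2 (L*N) (2*K*M) W' ψy ψz
      = (∑ r ∈ Finset.range (L*N), ∑ c' ∈ Finset.range (K*M),
          W' r c' * Complex.exp (Complex.I * ((r:ℂ)*(ψz:ℂ) + (c':ℂ)*(ψy:ℂ))))
      + (∑ r ∈ Finset.range (L*N), ∑ c' ∈ Finset.range (K*M),
          W' r (K*M + c') *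
            Complex.exp (Complex.I * ((r:ℂ)*(ψz:ℂ) + ((K*M + c' : ℕ):ℂ)*(ψy:ℂ)))) := by
    intro W'
    rw [arrayFactor2, ← Finset.sum_add_distrib]
    exact Finset.sum_congr rfl fun r _ => colsplit _
  have hA2' : ∀ l < L, ∀ k < K, ∀ n < N, ∀ m < M,
      WA (l*N+n) (K*M + k*M + m)
        = (fun l k => -V l k) l k * (starRingEnd ℂ) (WPB (N-1-n) (M-1-m)) := by
    intro l hl k hk n hn m hm
    rw [hA2 l hl k hk n hn m hm]
    ring
  have hnegQ : arrayFactor2 L K (fun l k => -V l k) ((M:ℝ)*ψy) ((N:ℝ)*ψz) = -Q := by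
    rw [hQdef]
    simp [arrayFactor2, neg_mul, Finset.sum_neg_distrib]
  have hFWA : arrayFactor2 (L*N) (2*K*M) WA ψy ψz
      = P * A + (-Q) * (c * (starRingEnd ℂ) B) := by
    rw [split WA, blockA L K N M U WPA WA hA1 ψy ψz,
      blockB L K N M (fun l k => -V l k) WPB WA hA2' ψy ψz, hnegQ]
  have hFWB : arrayFactor2 (L*N) (2*K*M) WB ψy ψz
      = P * B + Q * (c * (starRingEnd ℂ) A) := by
    rw [split WB, blockA L K N M U WPB WB hB1 ψy ψz,
      blockB L K N M V WPA WB hB2 ψy ψz]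
  have hconjc : (starRingEnd ℂ) c = Complex.exp (-(Complex.I *
      (((K*M : ℕ):ℂ)*(ψy:ℂ) + ((N:ℂ)-1)*(ψz:ℂ) + ((M:ℂ)-1)*(ψy:ℂ)))) := by
    rw [hcdef]
    exact conj_exp_I_real _ (by simp)
  have hcc : c * (starRingEnd ℂ) c = 1 := by
    rw [hconjc, hcdef, ← Complex.exp_add, add_neg_cancel, Complex.exp_zero]
  have hGpt : P * (starRingEnd ℂ) P + Q * (starRingEnd ℂ) Q = 2*(L:ℂ)*(K:ℂ) :=
    golay_pointwise L K hL hK U V hU hV hGolay ((M:ℝ)*ψy) ((N:ℝ)*ψz)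
  have keyC : arrayFactor2 (L*N) (2*K*M) WA ψy ψz *
        (starRingEnd ℂ) (arrayFactor2 (L*N) (2*K*M) WA ψy ψz) +
      arrayFactor2 (L*N) (2*K*M) WB ψy ψz *
        (starRingEnd ℂ) (arrayFactor2 (L*N) (2*K*M) WB ψy ψz)
      = 2*(L:ℂ)*(K:ℂ) * (A * (starRingEnd ℂ) A + B * (starRingEnd ℂ) B) := by
    rw [hFWA, hFWB]
    simp only [map_add, map_mul, map_neg, Complex.conj_conj]
    linear_combination (Q * (starRingEnd ℂ) Q *
        (A * (starRingEnd ℂ) A + B * (starRingEnd ℂ) B)) * hcc +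
      (A * (starRingEnd ℂ) A + B * (starRingEnd ℂ) B) * hGpt
  rw [Complex.mul_conj, Complex.mul_conj, Complex.mul_conj, Complex.mul_conj] at keyC
  rw [← Complex.normSq_eq_norm_sq, ← Complex.normSq_eq_norm_sq, ← Complex.normSq_eq_norm_sq,
    ← Complex.normSq_eq_norm_sq]
  exact_mod_cast keyC
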